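/- arXiv:2204.07843 — 7 statements merged into one kernel-verified Lean document; each statement's English description precedes it below -/
import Mathlib

section
/- The degenerate r-Whitney numbers of the first kind satisfy V_{m,mλ}^{(r)}(n,k) = Σ_{i=k}^{n} C(i,k) m^{n−i} S_{1,λ}(n,i) (−r)_{i−k, mλ}, where S_{1,λ} are the degenerate Stirling numbers of the first kind. -/
open Finset

/-- generalized falling factorial: (x)_{n,λ} = x(x-λ)···(x-(n-1)λ) -/
def dff (lam x : ℝ) (n : ℕ) : ℝ := ∏ i ∈ Finset.range n, (x - i * lam)

/-- generalized rising factorial: ⟨x⟩_{n,λ} = x(x+λ)···(x+(n-1)λ) -/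
def drf (lam x : ℝ) (n : ℕ) : ℝ := ∏ i ∈ Finset.range n, (x + i * lam)

lemma dff_succ (lam x : ℝ) (n : ℕ) : dff lam x (n+1) = dff lam x n * (x - n * lam) := by
  simp [dff, Finset.prod_range_succ]

lemma dff_zero (lam x : ℝ) : dff lam x 0 = 1 := by simp [dff]

lemma dff_scale (lam x : ℝ) (c : ℝ) (n : ℕ) :
    dff (c * lam) (c * x) n = c ^ n * dff lam x n := by
  unfold dff
  rw [show (∏ i ∈ range n, (c * x - i * (c * lam))) = ∏ i ∈ range n, c * (x - i * lam) from
    Finset.prod_congr rfl (by intros; ring)]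
  rw [Finset.prod_mul_distrib, Finset.prod_const, Finset.card_range]

lemma dff_vandermonde (lam a b : ℝ) (n : ℕ) :
    dff lam (a + b) n = ∑ k ∈ range (n+1), (n.choose k : ℝ) * dff lam a k * dff lam b (n-k) := by
  induction n with
  | zero => simp [dff]
  | succ n ih =>
    rw [dff_succ, ih, Finset.sum_mul]
    have key : ∀ k ∈ range (n+1),
        (n.choose k : ℝ) * dff lam a k * dff lam b (n-k) * (a + b - n * lam)
        = (n.choose k : ℝ) * dff lam a (k+1) * dff lam b (n-k)
            + (n.choose k : ℝ) * dff lam a k * dff lam b (n-k+1) := by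
      intro k hk
      rw [mem_range] at hk
      have hk' : k ≤ n := Nat.lt_succ_iff.mp hk
      have h1 : a + b - n * lam = (a - k * lam) + (b - ((n - k : ℕ) : ℝ) * lam) := by
        push_cast [Nat.cast_sub hk']; ring
      rw [h1, dff_succ, dff_succ]; ring
    rw [Finset.sum_congr rfl key, Finset.sum_add_distrib]
    -- RHS
    rw [Finset.sum_range_succ' (fun k => ((n+1).choose k : ℝ) * dff lam a k * dff lam b (n+1-k))]
    simp only [Nat.succ_sub_succ, Nat.choose_zero_right, Nat.cast_one, one_mul, dff_zero, mul_one,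
      Nat.choose_succ_succ, Nat.cast_add]
    rw [show (∑ i ∈ range (n+1),
        (((n.choose i : ℝ) + (n.choose (i+1) : ℝ)) * dff lam a (i+1) * dff lam b (n-i)))
        = ∑ i ∈ range (n+1), ((n.choose i : ℝ) * dff lam a (i+1) * dff lam b (n-i))
          + ∑ i ∈ range (n+1), ((n.choose (i+1) : ℝ) * dff lam a (i+1) * dff lam b (n-i)) from by
      rw [← Finset.sum_add_distrib]; exact Finset.sum_congr rfl (by intros; ring)]
    have h2 : (∑ k ∈ range (n+1), ((n.choose k : ℝ)) * dff lam a k * dff lam b (n-k+1))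
        = ∑ i ∈ range (n+1), ((n.choose (i+1) : ℝ)) * dff lam a (i+1) * dff lam b (n-i)
          + dff lam b (n+1) := by
      rw [Finset.sum_range_succ' (fun k => ((n.choose k : ℝ)) * dff lam a k * dff lam b (n-k+1))]
      rw [Finset.sum_range_succ (fun i => ((n.choose (i+1) : ℝ)) * dff lam a (i+1) * dff lam b (n-i))]
      simp only [Nat.choose_succ_self, Nat.cast_zero, zero_mul, add_zero, Nat.choose_zero_right,
        Nat.cast_one, one_mul, dff_zero, Nat.sub_zero, Nat.sub_self]
      congr 1
      refine Finset.sum_congr rfl fun i hi => ?_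
      rw [mem_range] at hi
      rw [show n - (i+1) + 1 = n - i from by omega]
    rw [h2]; simp only [Nat.sub_zero]; ring

noncomputable def Qp (lam : ℝ) (k : ℕ) : Polynomial ℝ :=
  ∏ i ∈ range k, (Polynomial.X - Polynomial.C ((i : ℝ) * lam))

lemma Qp_eval (lam y : ℝ) (k : ℕ) : (Qp lam k).eval y = dff lam y k := by
  simp [Qp, dff, Polynomial.eval_prod]

lemma Qp_monic (lam : ℝ) (k : ℕ) : (Qp lam k).Monic :=
  Polynomial.monic_prod_of_monic _ _ fun i _ => Polynomial.monic_X_sub_C _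

lemma Qp_natDegree (lam : ℝ) (k : ℕ) : (Qp lam k).natDegree = k := by
  rw [Qp, Polynomial.natDegree_prod]
  · simp only [Polynomial.natDegree_X_sub_C, Finset.sum_const, Finset.card_range, smul_eq_mul,
      mul_one]
  · intro i _; exact Polynomial.X_sub_C_ne_zero _

lemma dff_indep (lam : ℝ) : ∀ (n : ℕ) (d : ℕ → ℝ),
    (∀ y : ℝ, ∑ k ∈ range (n+1), d k * dff lam y k = 0) → ∀ k ≤ n, d k = 0 := by
  intro n
  induction n with
  | zero =>
    intro d h k hk
    interval_cases k
    have := h 0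
    simpa [dff] using this
  | succ n ih =>
    intro d h k hk
    have hP : (∑ j ∈ range (n+2), Polynomial.C (d j) * Qp lam j) = 0 := by
      apply Polynomial.funext
      intro y
      simp only [Polynomial.eval_finset_sum, Polynomial.eval_mul, Polynomial.eval_C,
        Polynomial.eval_zero, Qp_eval]
      exact h y
    have htop : d (n+1) = 0 := by
      have hc := congrArg (fun p => Polynomial.coeff p (n+1)) hP
      simp only [Polynomial.finset_sum_coeff, Polynomial.coeff_C_mul,
        Polynomial.coeff_zero] at hc
      rw [Finset.sum_range_succ] at hc
      have h1 : ∀ j ∈ range (n+1), d j * (Qp lam j).coeff (n+1) = 0 := by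
        intro j hj
        rw [mem_range] at hj
        rw [Polynomial.coeff_eq_zero_of_natDegree_lt (by rw [Qp_natDegree]; omega), mul_zero]
      rw [Finset.sum_congr rfl h1, Finset.sum_const_zero, zero_add] at hc
      have h2 : (Qp lam (n+1)).coeff (n+1) = 1 := by
        have := (Qp_monic lam (n+1)).leadingCoeff
        rwa [Polynomial.leadingCoeff, Qp_natDegree] at this
      rwa [h2, mul_one] at hc
    rcases Nat.lt_succ_iff_lt_or_eq.mp (Nat.lt_succ_of_le hk) with h' | h'
    · refine ih d ?_ k (Nat.lt_succ_iff.mp h')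
      intro y
      have := h y
      rwa [Finset.sum_range_succ, htop, zero_mul, add_zero] at this
    · rw [h']; exact htop


theorem stmt4 (m : ℕ) (hm : 0 < m) (r : ℕ) (lam : ℝ) (V S1 : ℕ → ℕ → ℝ)
    (hV : ∀ n : ℕ, ∀ x : ℝ,
      (m : ℝ) ^ n * dff 1 x n = ∑ k ∈ range (n + 1), V n k * dff ((m : ℝ) * lam) ((m : ℝ) * x + r) k)
    (hS1 : ∀ n : ℕ, ∀ x : ℝ,
      dff 1 x n = ∑ k ∈ range (n + 1), S1 n k * dff lam x k) :
    ∀ n k : ℕ, k ≤ n →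
      V n k = ∑ i ∈ Finset.Icc k n,
        (i.choose k : ℝ) * (m : ℝ) ^ (n - i) * S1 n i * dff ((m : ℝ) * lam) (-(r : ℝ)) (i - k) := by
  intro n k hk
  set μ : ℝ := (m : ℝ) * lam with hμ
  set c : ℕ → ℝ := fun k => ∑ i ∈ Finset.Icc k n,
    (i.choose k : ℝ) * (m : ℝ) ^ (n - i) * S1 n i * dff μ (-(r : ℝ)) (i - k) with hc
  have hm' : (m : ℝ) ≠ 0 := Nat.cast_ne_zero.mpr hm.ne'
  -- Step A: expansion with coefficients c
  have stepA : ∀ x : ℝ, (m : ℝ) ^ n * dff 1 x n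
      = ∑ j ∈ range (n + 1), c j * dff μ ((m : ℝ) * x + r) j := by
    intro x
    rw [hS1 n x, Finset.mul_sum]
    have e1 : ∀ i ∈ range (n+1),
        (m : ℝ) ^ n * (S1 n i * dff lam x i)
        = ∑ j ∈ range (i+1), ((i.choose j : ℝ) * (m : ℝ) ^ (n - i) * S1 n i
            * dff μ (-(r : ℝ)) (i - j)) * dff μ ((m : ℝ) * x + r) j := by
      intro i hi
      rw [mem_range] at hi
      have hin : i ≤ n := Nat.lt_succ_iff.mp hi
      have h1 : (m : ℝ) ^ n = (m : ℝ) ^ (n - i) * (m : ℝ) ^ i := by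
        rw [← pow_add]; congr 1; omega
      have h2 : (m : ℝ) ^ i * dff lam x i = dff μ ((m : ℝ) * x) i := (dff_scale lam x _ i).symm
      have h3 : (m : ℝ) * x = ((m : ℝ) * x + r) + (-(r : ℝ)) := by ring
      have h4 : dff μ ((m : ℝ) * x) i = ∑ j ∈ range (i+1),
          (i.choose j : ℝ) * dff μ ((m : ℝ) * x + r) j * dff μ (-(r : ℝ)) (i - j) := by
        conv_lhs => rw [h3]
        exact dff_vandermonde _ _ _ i
      calc (m : ℝ) ^ n * (S1 n i * dff lam x i)
          = (m : ℝ) ^ (n - i) * S1 n i * ((m : ℝ) ^ i * dff lam x i) := by rw [h1]; ring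
        _ = (m : ℝ) ^ (n - i) * S1 n i * dff μ ((m : ℝ) * x) i := by rw [h2]
        _ = _ := by
            rw [h4, Finset.mul_sum]
            exact Finset.sum_congr rfl fun j _ => by ring
    rw [Finset.sum_congr rfl e1]
    rw [Finset.sum_comm' (t := fun i => range (i+1)) (t' := range (n+1))
      (s' := fun j => Finset.Icc j n) (by
        intro i j
        simp only [mem_range, Finset.mem_Icc]
        omega)]
    refine Finset.sum_congr rfl fun j _ => ?_
    rw [hc, Finset.sum_mul]
  -- Step B: uniqueness
  have key : ∀ y : ℝ, ∑ j ∈ range (n+1), (V n j - c j) * dff μ y j = 0 := by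
    intro y
    have hx : (m : ℝ) * ((y - r) / m) + r = y := by field_simp; ring
    have h1 := hV n ((y - r) / m)
    have h2 := stepA ((y - r) / m)
    rw [hx] at h1 h2
    have := h1.symm.trans h2
    rw [show (∑ j ∈ range (n+1), (V n j - c j) * dff μ y j)
      = (∑ j ∈ range (n+1), V n j * dff μ y j) - ∑ j ∈ range (n+1), c j * dff μ y j from by
        rw [← Finset.sum_sub_distrib]; exact Finset.sum_congr rfl fun j _ => by ring]
    rw [this]; ring
  have h0 : V n k - c k = 0 := dff_indep μ n (fun j => V n j - c j) key k hk
  have h1 : V n k = c k := by linarith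
  exact h1
end

section
/- The degenerate r-Whitney numbers of the second kind satisfy W_{m,λ}^{(r)}(n,k) = Σ_{i=k}^{n} C(n,i) (r)_{n−i,λ} m^{i−k} S_{2,λ/m}(i,k), for all n ≥ k ≥ 0. -/
open Finset

lemma dff_add (lam x y : ℝ) : ∀ n : ℕ, dff lam (x + y) n
    = ∑ i ∈ range (n+1), (n.choose i : ℝ) * dff lam x i * dff lam y (n - i) := by
  intro n
  induction n with
  | zero => simp [dff]
  | succ n ih =>
    rw [dff_succ, ih, Finset.sum_mul]
    have key : ∀ i ∈ range (n+1),
        (n.choose i : ℝ) * dff lam x i * dff lam y (n - i) * (x + y - n * lam)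
        = (n.choose i : ℝ) * (dff lam x (i+1) * dff lam y (n - i))
          + (n.choose i : ℝ) * (dff lam x i * dff lam y (n - i + 1)) := by
      intro i hi
      rw [Finset.mem_range] at hi
      have hi' : i ≤ n := Nat.lt_succ_iff.mp hi
      rw [dff_succ, dff_succ]
      have hcast : ((n - i : ℕ) : ℝ) = (n : ℝ) - i := Nat.cast_sub hi'
      rw [hcast]
      ring
    rw [Finset.sum_congr rfl key, Finset.sum_add_distrib]
    -- A = ∑ i ∈ range (n+1), C(n,i) * X_{i+1} * Y_{n-i}
    -- B = ∑ i ∈ range (n+1), C(n,i) * X_i * Y_{n-i+1}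
    have hB : ∑ i ∈ range (n+1), (n.choose i : ℝ) * (dff lam x i * dff lam y (n - i + 1))
        = dff lam y (n+1) + ∑ i ∈ range (n+1), (n.choose (i+1) : ℝ) * (dff lam x (i+1) * dff lam y (n - i)) := by
      rw [Finset.sum_range_succ'] 
      have h1 : ∀ i ∈ range n, (n.choose (i+1) : ℝ) * (dff lam x (i+1) * dff lam y (n - (i+1) + 1))
          = (n.choose (i+1) : ℝ) * (dff lam x (i+1) * dff lam y (n - i)) := by
        intro i hi
        rw [Finset.mem_range] at hi
        congr 3
        omega
      rw [Finset.sum_congr rfl h1]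
      have h2 : ∑ i ∈ range (n+1), (n.choose (i+1) : ℝ) * (dff lam x (i+1) * dff lam y (n - i))
          = ∑ i ∈ range n, (n.choose (i+1) : ℝ) * (dff lam x (i+1) * dff lam y (n - i)) := by
        rw [Finset.sum_range_succ]
        simp [Nat.choose_succ_self]
      rw [h2]
      simp [dff]
      ring
    rw [hB, add_left_comm, ← Finset.sum_add_distrib]
    have h3 : ∀ i ∈ range (n+1),
        (n.choose i : ℝ) * (dff lam x (i+1) * dff lam y (n - i))
        + (n.choose (i+1) : ℝ) * (dff lam x (i+1) * dff lam y (n - i))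
        = ((n+1).choose (i+1) : ℝ) * dff lam x (i+1) * dff lam y (n + 1 - (i+1)) := by
      intro i hi
      have : (n+1).choose (i+1) = n.choose i + n.choose (i+1) := Nat.choose_succ_succ n i
      rw [this]
      have : n + 1 - (i + 1) = n - i := by omega
      rw [this]
      push_cast
      ring
    rw [show ∑ i ∈ range (n+1), ((n.choose i : ℝ) * (dff lam x (i+1) * dff lam y (n - i))
        + (n.choose (i+1) : ℝ) * (dff lam x (i+1) * dff lam y (n - i)))
        = ∑ i ∈ range (n+1), ((n+1).choose (i+1) : ℝ) * dff lam x (i+1) * dff lam y (n + 1 - (i+1))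
      from Finset.sum_congr rfl h3]
    rw [Finset.sum_range_succ' (fun i => ((n+1).choose i : ℝ) * dff lam x i * dff lam y (n + 1 - i)) (n+1)]
    simp [dff]
    ring

lemma dff_smul (m lam x : ℝ) (hm : m ≠ 0) (n : ℕ) :
    dff lam (m * x) n = m ^ n * dff (lam / m) x n := by
  unfold dff
  calc ∏ i ∈ range n, (m * x - i * lam)
      = ∏ i ∈ range n, (m * (x - i * (lam / m))) := by
        apply Finset.prod_congr rfl
        intro i _
        field_simp
    _ = m ^ n * ∏ i ∈ range n, (x - i * (lam / m)) := by
        rw [Finset.prod_mul_distrib, Finset.prod_const, Finset.card_range]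

lemma dff_one_nat_eq_zero (j k : ℕ) (h : j < k) : dff 1 (j : ℝ) k = 0 := by
  unfold dff
  apply Finset.prod_eq_zero (Finset.mem_range.mpr h)
  simp

lemma dff_one_nat_pos (j : ℕ) : 0 < dff 1 (j : ℝ) j := by
  unfold dff
  apply Finset.prod_pos
  intro i hi
  rw [Finset.mem_range] at hi
  have : (i : ℝ) < j := by exact_mod_cast hi
  rw [mul_one]
  linarith

lemma coeff_unique (N : ℕ) (a : ℕ → ℝ)
    (h : ∀ x : ℝ, ∑ k ∈ range N, a k * dff 1 x k = 0) :
    ∀ j < N, a j = 0 := by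
  intro j
  induction j using Nat.strong_induction_on with
  | _ j ih =>
    intro hj
    have h0 := h (j : ℝ)
    have hsplit : ∑ k ∈ range N, a k * dff 1 (j : ℝ) k
        = ∑ k ∈ range (j+1), a k * dff 1 (j : ℝ) k := by
      apply (Finset.sum_subset (by rw [Finset.range_subset_range]; omega) ?_).symm
      intro k _ hk
      rw [Finset.mem_range, not_lt] at hk
      rw [dff_one_nat_eq_zero j k (by omega), mul_zero]
    rw [hsplit, Finset.sum_range_succ] at h0
    have hz : ∑ k ∈ range j, a k * dff 1 (j : ℝ) k = 0 := by
      apply Finset.sum_eq_zero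
      intro k hk
      rw [Finset.mem_range] at hk
      rw [ih k hk (by omega), zero_mul]
    rw [hz, zero_add] at h0
    have hp := dff_one_nat_pos j
    rcases mul_eq_zero.mp h0 with h | h
    · exact h
    · linarith

theorem stmt5 (m : ℕ) (hm : 0 < m) (r : ℕ) (lam : ℝ) (W S2 : ℕ → ℕ → ℝ)
    (hW : ∀ n : ℕ, ∀ x : ℝ,
      dff lam ((m : ℝ) * x + r) n = ∑ k ∈ range (n + 1), W n k * (m : ℝ) ^ k * dff 1 x k)
    (hS2 : ∀ n : ℕ, ∀ x : ℝ,
      dff (lam / m) x n = ∑ k ∈ range (n + 1), S2 n k * dff 1 x k) :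
    ∀ n k : ℕ, k ≤ n →
      W n k = ∑ i ∈ Finset.Icc k n,
        (n.choose i : ℝ) * dff lam (r : ℝ) (n - i) * (m : ℝ) ^ (i - k) * S2 i k := by
  intro n k hkn
  have hm0 : (m : ℝ) ≠ 0 := Nat.cast_ne_zero.mpr hm.ne'
  -- the expansion
  set c : ℕ → ℝ := fun k => ∑ i ∈ Finset.Icc k n,
      (n.choose i : ℝ) * dff lam (r : ℝ) (n - i) * (m : ℝ) ^ i * S2 i k with hc
  have expand : ∀ x : ℝ, dff lam ((m : ℝ) * x + r) n = ∑ k ∈ range (n+1), c k * dff 1 x k := by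
    intro x
    rw [dff_add lam ((m : ℝ) * x) (r : ℝ) n]
    have step1 : ∀ i ∈ range (n+1),
        (n.choose i : ℝ) * dff lam ((m : ℝ) * x) i * dff lam (r : ℝ) (n - i)
        = ∑ k ∈ range (i+1), (n.choose i : ℝ) * dff lam (r : ℝ) (n - i) * (m : ℝ) ^ i * S2 i k * dff 1 x k := by
      intro i _
      rw [dff_smul (m : ℝ) lam x hm0 i, hS2 i x, Finset.mul_sum, Finset.mul_sum, Finset.sum_mul]
      apply Finset.sum_congr rfl
      intro k _
      ring
    rw [Finset.sum_congr rfl step1]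
    rw [Finset.sum_comm' (t' := range (n+1)) (s' := fun k => Finset.Icc k n)
      (f := fun i k => (n.choose i : ℝ) * dff lam (r : ℝ) (n - i) * (m : ℝ) ^ i * S2 i k * dff 1 x k)
      ?_]
    · apply Finset.sum_congr rfl
      intro k _
      rw [hc, Finset.sum_mul]
    · intro i k
      simp only [Finset.mem_range, Finset.mem_Icc]
      omega
  -- coefficients agree
  have key : ∀ j < n + 1, W n j * (m : ℝ) ^ j - c j = 0 := by
    apply coeff_unique (n+1) (fun j => W n j * (m : ℝ) ^ j - c j)
    intro x
    have h1 := hW n x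
    have h2 := expand x
    have : ∑ j ∈ range (n+1), (W n j * (m : ℝ) ^ j - c j) * dff 1 x j
        = (∑ j ∈ range (n+1), W n j * (m : ℝ) ^ j * dff 1 x j)
          - ∑ j ∈ range (n+1), c j * dff 1 x j := by
      rw [← Finset.sum_sub_distrib]
      apply Finset.sum_congr rfl
      intro j _
      ring
    rw [this, ← h1, ← h2, sub_self]
  have hk := key k (by omega)
  have hck : c k = (m : ℝ) ^ k * ∑ i ∈ Finset.Icc k n,
      (n.choose i : ℝ) * dff lam (r : ℝ) (n - i) * (m : ℝ) ^ (i - k) * S2 i k := by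
    rw [hc, Finset.mul_sum]
    apply Finset.sum_congr rfl
    intro i hi
    rw [Finset.mem_Icc] at hi
    have : (m : ℝ) ^ i = (m : ℝ) ^ k * (m : ℝ) ^ (i - k) := by
      rw [← pow_add]
      congr 1
      omega
    rw [this]
    ring
  have hmk : (m : ℝ) ^ k ≠ 0 := pow_ne_zero _ hm0
  apply mul_right_cancel₀ hmk
  rw [sub_eq_zero] at hk
  rw [hk, hck]
  ring
end

section
/- The unsigned degenerate r-Stirling numbers of the first kind satisfy [n+r, k+r]_{r,λ} = Σ_{i=k}^{n} (−1)^{i−k} (−r)_{i−k,λ} · [n,i]_λ · C(i,k), where [n,i]_λ are the degenerate unsigned Stirling numbers of the first kind defined by ⟨x⟩_n = Σ_{i=0}^n [n,i]_λ ⟨x⟩_{i,λ}. -/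
open Finset Polynomial

lemma drf_zero (lam x : ℝ) : drf lam x 0 = 1 := by simp [drf]

lemma drf_succ (lam x : ℝ) (n : ℕ) : drf lam x (n + 1) = drf lam x n * (x + n * lam) := by
  simp [drf, Finset.prod_range_succ]

lemma drf_vandermonde (lam : ℝ) : ∀ (n : ℕ) (x y : ℝ),
    drf lam (x + y) n
      = ∑ k ∈ range (n + 1), (n.choose k : ℝ) * drf lam x k * drf lam y (n - k) := by
  intro n
  induction n with
  | zero => intro x y; simp [drf]
  | succ n ih =>
    intro x y
    rw [drf_succ, ih]
    rw [Finset.sum_mul]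
    have split : ∀ k ∈ range (n + 1),
        (n.choose k : ℝ) * drf lam x k * drf lam y (n - k) * (x + y + (n:ℝ) * lam)
          = (n.choose k : ℝ) * drf lam x (k + 1) * drf lam y (n - k)
            + (n.choose k : ℝ) * drf lam x k * drf lam y (n - k + 1) := by
      intro k hk
      rw [Finset.mem_range] at hk
      have hk' : k ≤ n := Nat.lt_succ_iff.mp hk
      rw [drf_succ, drf_succ]
      have : ((n - k : ℕ) : ℝ) = (n : ℝ) - k := by
        rw [Nat.cast_sub hk']
      rw [this]
      push_cast
      ring
    rw [Finset.sum_congr rfl split, Finset.sum_add_distrib]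
    -- second sum: ∑ k ∈ range(n+1), C(n,k) drf x k drf y (n-k+1)
    have h2 : ∀ k ∈ range (n + 1), (n.choose k : ℝ) * drf lam x k * drf lam y (n - k + 1)
        = (n.choose k : ℝ) * drf lam x k * drf lam y (n + 1 - k) := by
      intro k hk
      rw [Finset.mem_range] at hk
      congr 2
      omega
    rw [Finset.sum_congr rfl h2]
    -- now decompose target
    rw [Finset.sum_range_succ' (fun k => ((n+1).choose k : ℝ) * drf lam x k * drf lam y (n + 1 - k)) (n+1)]
    rw [Finset.sum_range_succ' (fun k => (n.choose k : ℝ) * drf lam x k * drf lam y (n + 1 - k)) n]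
    simp only [Nat.choose_zero_right, Nat.cast_one, drf_zero, Nat.sub_zero]
    have hext : ∑ k ∈ range (n+1), (n.choose (k+1) : ℝ) * drf lam x (k+1) * drf lam y (n + 1 - (k+1))
        = ∑ k ∈ range n, (n.choose (k+1) : ℝ) * drf lam x (k+1) * drf lam y (n + 1 - (k+1)) := by
      rw [Finset.sum_range_succ]
      simp [Nat.choose_succ_self]
    rw [← hext, ← add_assoc, ← Finset.sum_add_distrib]
    have : ∀ k ∈ range (n+1),
        (n.choose k : ℝ) * drf lam x (k+1) * drf lam y (n - k)
          + (n.choose (k+1) : ℝ) * drf lam x (k+1) * drf lam y (n + 1 - (k+1))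
        = ((n+1).choose (k+1) : ℝ) * drf lam x (k+1) * drf lam y (n + 1 - (k+1)) := by
      intro k hk
      have : n + 1 - (k + 1) = n - k := by omega
      rw [this, Nat.choose_succ_succ]
      push_cast
      ring
    rw [Finset.sum_congr rfl this]

noncomputable def drfP (lam : ℝ) (n : ℕ) : Polynomial ℝ :=
  ∏ i ∈ range n, (X + C ((i : ℝ) * lam))

lemma drfP_eval (lam x : ℝ) (n : ℕ) : (drfP lam n).eval x = drf lam x n := by
  simp [drfP, drf, Polynomial.eval_prod]

lemma drfP_monic (lam : ℝ) (n : ℕ) : (drfP lam n).Monic :=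
  Polynomial.monic_prod_of_monic _ _ (fun i _ => Polynomial.monic_X_add_C _)

lemma drfP_natDegree (lam : ℝ) (n : ℕ) : (drfP lam n).natDegree = n := by
  rw [drfP, Polynomial.natDegree_prod _ _ (fun i _ => (Polynomial.monic_X_add_C _).ne_zero)]
  simp only [Polynomial.natDegree_X_add_C, Finset.sum_const, smul_eq_mul, mul_one,
    Finset.card_range]

lemma coeff_top (lam : ℝ) (a : ℕ → ℝ) (n : ℕ) :
    (∑ k ∈ range (n + 1), C (a k) * drfP lam k).coeff n = a n := by
  rw [Finset.sum_range_succ, Polynomial.coeff_add]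
  have h1 : (∑ k ∈ range n, C (a k) * drfP lam k).coeff n = 0 := by
    rw [Polynomial.finset_sum_coeff]
    apply Finset.sum_eq_zero
    intro k hk
    rw [Finset.mem_range] at hk
    rw [Polynomial.coeff_C_mul]
    rw [Polynomial.coeff_eq_zero_of_natDegree_lt (by rw [drfP_natDegree]; exact hk)]
    ring
  rw [h1, Polynomial.coeff_C_mul]
  have := (drfP_monic lam n).coeff_natDegree
  rw [drfP_natDegree] at this
  rw [this]
  ring

lemma drf_unique (lam : ℝ) : ∀ (n : ℕ) (a b : ℕ → ℝ),
    (∀ x : ℝ, ∑ k ∈ range (n + 1), a k * drf lam x k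
      = ∑ k ∈ range (n + 1), b k * drf lam x k) → ∀ k ≤ n, a k = b k := by
  intro n
  induction n with
  | zero =>
    intro a b h k hk
    interval_cases k
    have := h 0
    simpa [drf] using this
  | succ n ih =>
    intro a b h k hk
    have hP : (∑ k ∈ range (n + 2), C (a k) * drfP lam k)
        = ∑ k ∈ range (n + 2), C (b k) * drfP lam k := by
      apply Polynomial.funext
      intro x
      simpa [Polynomial.eval_finset_sum, drfP_eval] using h x
    have htop : a (n + 1) = b (n + 1) := by
      have h1 := coeff_top lam a (n + 1)
      have h2 := coeff_top lam b (n + 1)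
      rw [← h1, ← h2, hP]
    have hrest : ∀ x : ℝ, ∑ k ∈ range (n + 1), a k * drf lam x k
        = ∑ k ∈ range (n + 1), b k * drf lam x k := by
      intro x
      have := h x
      rw [Finset.sum_range_succ (fun k => a k * drf lam x k),
        Finset.sum_range_succ (fun k => b k * drf lam x k), htop] at this
      linarith
    rcases Nat.lt_or_ge k (n + 1) with hlt | hge
    · exact ih a b hrest k (Nat.lt_succ_iff.mp hlt)
    · have : k = n + 1 := le_antisymm hk hge
      rw [this]; exact htop

lemma drf_neg (lam r : ℝ) (m : ℕ) : dff lam (-r) m = (-1 : ℝ) ^ m * drf lam r m := by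
  rw [dff, drf, show ((-1:ℝ)^m) = ∏ _i ∈ range m, (-1:ℝ) by simp,
    ← Finset.prod_mul_distrib]
  apply Finset.prod_congr rfl
  intro i _
  ring

theorem stmt6 (r : ℕ) (lam : ℝ) (Str St : ℕ → ℕ → ℝ)
    (hStr : ∀ n : ℕ, ∀ x : ℝ,
      drf 1 (x + r) n = ∑ k ∈ range (n + 1), Str n k * drf lam x k)
    (hSt : ∀ n : ℕ, ∀ x : ℝ,
      drf 1 x n = ∑ i ∈ range (n + 1), St n i * drf lam x i) :
    ∀ n k : ℕ, k ≤ n →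
      Str n k = ∑ i ∈ Finset.Icc k n,
        (-1 : ℝ) ^ (i - k) * dff lam (-(r : ℝ)) (i - k) * St n i * (i.choose k : ℝ) := by
  intro n k hk
  set B : ℕ → ℝ := fun k => ∑ i ∈ Finset.Icc k n,
    (-1 : ℝ) ^ (i - k) * dff lam (-(r : ℝ)) (i - k) * St n i * (i.choose k : ℝ) with hB
  have key : ∀ x : ℝ, ∑ j ∈ range (n + 1), Str n j * drf lam x j
      = ∑ j ∈ range (n + 1), B j * drf lam x j := by
    intro x
    rw [← hStr n x]
    have e1 : drf 1 (x + r) n = ∑ i ∈ range (n + 1), St n i * drf lam (x + r) i :=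
      hSt n (x + r)
    rw [e1]
    have e2 : ∀ i ∈ range (n + 1), St n i * drf lam (x + r) i
        = ∑ j ∈ range (i + 1),
            St n i * ((i.choose j : ℝ) * drf lam x j * drf lam r (i - j)) := by
      intro i _
      rw [drf_vandermonde lam i x r, Finset.mul_sum]
    rw [Finset.sum_congr rfl e2]
    rw [Finset.sum_comm' (s := range (n+1)) (t := fun i => range (i+1))
      (t' := range (n+1)) (s' := fun j => Finset.Icc j n)
      (by intro i j; simp only [Finset.mem_range, Finset.mem_Icc]; omega)]
    apply Finset.sum_congr rfl
    intro j _
    rw [hB]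
    simp only
    rw [Finset.sum_mul]
    apply Finset.sum_congr rfl
    intro i hi
    rw [Finset.mem_Icc] at hi
    rw [drf_neg]
    have hsq : ((-1:ℝ))^(i-j) * (-1:ℝ)^(i-j) = 1 := by
      rw [← pow_add, ← two_mul, pow_mul]; norm_num
    linear_combination (-(St n i * (i.choose j : ℝ) * drf lam x j * drf lam r (i - j))) * hsq
  have := drf_unique lam n (fun j => Str n j) B key k hk
  simpa using this
end

section
/- The degenerate r-Whitney numbers of the second kind satisfy W_{m,λ}^{(r+1)}(n,k) = Σ_{l=k}^{n} C(n,l) (1)_{n−l,λ} W_{m,λ}^{(r)}(l,k), where (1)_{j,λ} = 1·(1−λ)···(1−(j−1)λ). -/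
open Finset

lemma dff_vand (lam y : ℝ) : ∀ (n : ℕ) (x : ℝ),
    dff lam (x + y) n = ∑ l ∈ range (n+1), (n.choose l : ℝ) * dff lam x l * dff lam y (n - l) := by
  intro n
  induction n with
  | zero => intro x; simp [dff]
  | succ n ih =>
    intro x
    rw [dff_succ, ih]
    have key : ∀ l ∈ range (n+1),
        (n.choose l : ℝ) * dff lam x l * dff lam y (n - l) * (x + y - n * lam)
        = (n.choose l : ℝ) * dff lam x (l+1) * dff lam y (n - l)
          + (n.choose l : ℝ) * dff lam x l * dff lam y (n - l + 1) := by
      intro l hl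
      rw [mem_range] at hl
      have hl' : l ≤ n := Nat.lt_succ_iff.mp hl
      rw [dff_succ, dff_succ]
      have hc : ((n - l : ℕ) : ℝ) = (n : ℝ) - l := by
        push_cast [hl']; ring
      rw [hc]; ring
    rw [Finset.sum_mul, Finset.sum_congr rfl key, Finset.sum_add_distrib]
    -- now rewrite RHS
    rw [Finset.sum_range_succ' (fun l => ((n+1).choose l : ℝ) * dff lam x l * dff lam y (n + 1 - l)) (n+1)]
    have step1 : ∀ l ∈ range (n+1),
        (((n+1).choose (l+1) : ℝ)) * dff lam x (l+1) * dff lam y (n + 1 - (l+1))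
        = (n.choose l : ℝ) * dff lam x (l+1) * dff lam y (n - l)
          + (n.choose (l+1) : ℝ) * dff lam x (l+1) * dff lam y (n - l) := by
      intro l hl
      have : (n+1).choose (l+1) = n.choose l + n.choose (l+1) := Nat.choose_succ_succ n l
      rw [this]
      have : n + 1 - (l + 1) = n - l := by omega
      rw [this]
      push_cast
      ring
    rw [Finset.sum_congr rfl step1, Finset.sum_add_distrib, add_assoc]
    congr 1
    -- remaining: ∑ C(n,l) dff x l dff y (n-l+1) = ∑ C(n,l+1) dff x (l+1) dff y (n-l) + C(n+1,0)-term
    have h0 : ((n+1).choose 0 : ℝ) * dff lam x 0 * dff lam y (n + 1 - 0) = dff lam y (n+1) := by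
      simp [dff]
    rw [h0]
    have : ∑ l ∈ range (n+1), (n.choose (l+1) : ℝ) * dff lam x (l+1) * dff lam y (n - l) + dff lam y (n+1)
        = ∑ l ∈ range (n+2), (n.choose l : ℝ) * dff lam x l * dff lam y (n + 1 - l) := by
      rw [Finset.sum_range_succ' (fun l => (n.choose l : ℝ) * dff lam x l * dff lam y (n + 1 - l)) (n+1)]
      congr 1
      · apply Finset.sum_congr rfl
        intro l hl
        rw [mem_range] at hl
        have : n + 1 - (l + 1) = n - l := by omega
        rw [this]
      · simp [dff]
    rw [this, Finset.sum_range_succ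
      (fun l => (n.choose l : ℝ) * dff lam x l * dff lam y (n + 1 - l)) (n+1),
      Nat.choose_succ_self]
    push_cast
    rw [zero_mul, zero_mul, add_zero]
    apply Finset.sum_congr rfl
    intro l hl
    rw [mem_range] at hl
    have : n + 1 - l = n - l + 1 := by omega
    rw [this]

lemma dff_one_nat_zero (k j : ℕ) (h : k < j) : dff 1 (k : ℝ) j = 0 := by
  apply Finset.prod_eq_zero (Finset.mem_range.mpr h)
  simp

lemma dff_one_self_ne (k : ℕ) : dff 1 (k : ℝ) k ≠ 0 := by
  apply ne_of_gt
  apply Finset.prod_pos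
  intro i hi
  rw [mem_range] at hi
  have : (i : ℝ) < k := by exact_mod_cast hi
  simpa using sub_pos.mpr this

lemma extract (N : ℕ) (c : ℕ → ℝ)
    (h : ∀ x : ℝ, ∑ k ∈ range (N+1), c k * dff 1 x k = 0) :
    ∀ k, k ≤ N → c k = 0 := by
  intro k
  induction k using Nat.strong_induction_on with
  | _ k ih =>
    intro hk
    have h1 := h (k : ℝ)
    have h2 : ∑ j ∈ range (N+1), c j * dff 1 (k : ℝ) j = c k * dff 1 (k : ℝ) k := by
      apply Finset.sum_eq_single k
      · intro j hj hne
        rcases lt_or_gt_of_ne hne with hlt | hgt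
        · rw [ih j hlt (le_trans hlt.le hk)]; ring
        · rw [dff_one_nat_zero k j hgt]; ring
      · intro hnot
        exact absurd (mem_range.mpr (Nat.lt_succ_of_le hk)) hnot
    rw [h2] at h1
    exact (mul_eq_zero.mp h1).resolve_right (dff_one_self_ne k)

theorem stmt15 (m : ℕ) (hm : 0 < m) (r : ℕ) (lam : ℝ) (Wr Wr1 : ℕ → ℕ → ℝ)
    (hWr : ∀ n : ℕ, ∀ x : ℝ,
      dff lam ((m : ℝ) * x + r) n = ∑ k ∈ range (n + 1), Wr n k * (m : ℝ) ^ k * dff 1 x k)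
    (hWr1 : ∀ n : ℕ, ∀ x : ℝ,
      dff lam ((m : ℝ) * x + (r + 1)) n = ∑ k ∈ range (n + 1), Wr1 n k * (m : ℝ) ^ k * dff 1 x k) :
    ∀ n k : ℕ, k ≤ n →
      Wr1 n k = ∑ l ∈ Finset.Icc k n, (n.choose l : ℝ) * dff lam 1 (n - l) * Wr l k := by
  intro n k hk
  set b : ℕ → ℝ := fun j => ∑ l ∈ Finset.Icc j n, (n.choose l : ℝ) * dff lam 1 (n - l) * Wr l j with hb
  have key : ∀ x : ℝ, ∑ j ∈ range (n+1), (Wr1 n j - b j) * (m : ℝ) ^ j * dff 1 x j = 0 := by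
    intro x
    have expand : dff lam ((m : ℝ) * x + (r + 1)) n
        = ∑ j ∈ range (n+1), b j * (m : ℝ) ^ j * dff 1 x j := by
      have harg : (m : ℝ) * x + (r + 1) = ((m : ℝ) * x + r) + 1 := by ring
      rw [harg, dff_vand lam 1 n ((m : ℝ) * x + r)]
      have step : ∀ l ∈ range (n+1),
          (n.choose l : ℝ) * dff lam ((m : ℝ) * x + r) l * dff lam 1 (n - l)
          = ∑ j ∈ range (n+1), (if j ≤ l then
              (n.choose l : ℝ) * dff lam 1 (n - l) * Wr l j * (m : ℝ) ^ j * dff 1 x j else 0) := by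
        intro l hl
        rw [mem_range, Nat.lt_succ_iff] at hl
        rw [hWr l x, Finset.mul_sum, Finset.sum_mul]
        rw [← Finset.sum_filter]
        have hfil : Finset.filter (fun j => j ≤ l) (range (n+1)) = range (l+1) := by
          ext j
          simp only [Finset.mem_filter, mem_range, Nat.lt_succ_iff]
          omega
        rw [hfil]
        apply Finset.sum_congr rfl
        intro j _
        ring
      rw [Finset.sum_congr rfl step, Finset.sum_comm]
      apply Finset.sum_congr rfl
      intro j hj
      rw [mem_range, Nat.lt_succ_iff] at hj
      rw [Finset.sum_ite, Finset.sum_const_zero, add_zero]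
      have hfil : Finset.filter (fun l => j ≤ l) (range (n+1)) = Finset.Icc j n := by
        ext l
        simp only [Finset.mem_filter, mem_range, Finset.mem_Icc, Nat.lt_succ_iff]
        omega
      rw [hfil, hb]
      simp only []
      rw [Finset.sum_mul, Finset.sum_mul]
    have h1 := hWr1 n x
    rw [expand] at h1
    have h2 : ∑ j ∈ range (n+1), (Wr1 n j - b j) * (m : ℝ) ^ j * dff 1 x j
        = ∑ j ∈ range (n+1), Wr1 n j * (m : ℝ) ^ j * dff 1 x j
          - ∑ j ∈ range (n+1), b j * (m : ℝ) ^ j * dff 1 x j := by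
      rw [← Finset.sum_sub_distrib]
      apply Finset.sum_congr rfl
      intro j _
      ring
    rw [h2, ← h1, sub_self]
  have hz := extract n (fun j => (Wr1 n j - b j) * (m : ℝ) ^ j) key k hk
  have hmne : ((m : ℝ)) ^ k ≠ 0 := pow_ne_zero _ (by positivity)
  have : Wr1 n k - b k = 0 := (mul_eq_zero.mp hz).resolve_right hmne
  linarith [this]
end

section
/- The degenerate r-Whitney numbers satisfy the orthogonality relations: for all n ≥ j ≥ 0, Σ_{k=j}^{n} W_{m,λ}^{(r)}(n,k) V_{m,λ}^{(r)}(k,j) = δ_{n,j} and Σ_{k=j}^{n} V_{m,λ}^{(r)}(n,k) W_{m,λ}^{(r)}(k,j) = δ_{n,j}, where δ is the Kronecker delta. -/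
open Finset

open Polynomial in
/-- Linear independence of shifted factorial bases. -/
lemma key_indep (a c : ℕ → ℝ) (n : ℕ)
    (h : ∀ x : ℝ, ∑ j ∈ range (n + 1), c j * ∏ i ∈ range j, (x - a i) = 0) :
    ∀ j ≤ n, c j = 0 := by
  set p : Polynomial ℝ := ∑ j ∈ range (n + 1), C (c j) * ∏ i ∈ range j, (X - C (a i)) with hp
  have hmon : ∀ j : ℕ, ((∏ i ∈ range j, (X - C (a i)) : Polynomial ℝ)).Monic := by
    intro j
    exact monic_prod_of_monic _ _ fun i _ => monic_X_sub_C (a i)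
  have hdeg : ∀ j : ℕ, ((∏ i ∈ range j, (X - C (a i)) : Polynomial ℝ)).natDegree = j := by
    intro j
    rw [natDegree_prod _ _ fun i _ => (monic_X_sub_C (a i)).ne_zero]
    simp
  have hp0 : p = 0 := by
    apply Polynomial.funext
    intro x
    simp only [hp, eval_finset_sum, eval_zero, eval_mul, eval_C, eval_prod, eval_sub, eval_X]
    exact h x
  have step : ∀ t ≤ n, (∀ s, t < s → s ≤ n → c s = 0) → c t = 0 := by
    intro t ht hs
    have hc : p.coeff t = c t := by
      rw [hp, finset_sum_coeff]
      rw [Finset.sum_eq_single t]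
      · have h1 : (∏ i ∈ range t, (X - C (a i)) : Polynomial ℝ).coeff t = 1 := by
          have := (hmon t).coeff_natDegree
          rwa [hdeg t] at this
        rw [coeff_C_mul, h1, mul_one]
      · intro b hb hbt
        rcases lt_or_gt_of_ne hbt with h1 | h1
        · rw [coeff_C_mul, coeff_eq_zero_of_natDegree_lt (by rw [hdeg]; exact h1), mul_zero]
        · rw [hs b h1 (Nat.lt_succ_iff.mp (mem_range.mp hb)), map_zero, zero_mul, coeff_zero]
      · intro h'
        exact absurd (mem_range.mpr (Nat.lt_succ_of_le ht)) h'
    rw [← hc, hp0, coeff_zero]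
  have main : ∀ d, ∀ t, t ≤ n → n - t ≤ d → c t = 0 := by
    intro d
    induction d with
    | zero => intro t ht hd; exact step t ht fun s hts hsn => absurd (by omega : False) id
    | succ d ih =>
        intro t ht hd
        exact step t ht fun s hts hsn => ih s hsn (by omega)
  intro j hj
  exact main n j hj (by omega)

lemma swap_tri (n : ℕ) (f : ℕ → ℕ → ℝ) :
    ∑ k ∈ range (n + 1), ∑ j ∈ range (k + 1), f k j
      = ∑ j ∈ range (n + 1), ∑ k ∈ Icc j n, f k j := by
  have := Finset.sum_Ico_Ico_comm 0 (n + 1) fun i j => f j i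
  simp only [Nat.Ico_zero_eq_range] at this
  rw [← this]
  apply Finset.sum_congr rfl
  intro i _
  rw [Finset.Ico_add_one_right_eq_Icc]

theorem stmt16 (m : ℕ) (hm : 0 < m) (r : ℕ) (lam : ℝ) (V W : ℕ → ℕ → ℝ)
    (hW : ∀ n : ℕ, ∀ x : ℝ,
      dff lam ((m : ℝ) * x + r) n = ∑ k ∈ range (n + 1), W n k * (m : ℝ) ^ k * dff 1 x k)
    (hV : ∀ n : ℕ, ∀ x : ℝ,
      (m : ℝ) ^ n * dff 1 x n = ∑ k ∈ range (n + 1), V n k * dff lam ((m : ℝ) * x + r) k) :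
    ∀ n j : ℕ, j ≤ n →
      (∑ k ∈ Finset.Icc j n, W n k * V k j) = (if n = j then (1 : ℝ) else 0) ∧
      (∑ k ∈ Finset.Icc j n, V n k * W k j) = (if n = j then (1 : ℝ) else 0) := by
  have hm0 : (m : ℝ) ≠ 0 := Nat.cast_ne_zero.mpr hm.ne'
  intro n j hjn
  have hb1 : ∀ (x : ℝ) (k : ℕ), dff 1 x k = ∏ i ∈ range k, (x - (i : ℝ)) := by
    intro x k; simp [dff]
  set a1 : ℕ → ℝ := fun i => ((i : ℝ) * lam - r) / m with ha1
  have hb2 : ∀ (x : ℝ) (k : ℕ),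
      dff lam ((m : ℝ) * x + r) k = (m : ℝ) ^ k * ∏ i ∈ range k, (x - a1 i) := by
    intro x k
    rw [dff, show ((m:ℝ)^k : ℝ) = ∏ _i ∈ range k, (m:ℝ) by simp, ← Finset.prod_mul_distrib]
    apply Finset.prod_congr rfl
    intro i _
    rw [ha1]
    field_simp
    ring
  -- Part 2: V ∘ W
  have e2 : ∀ x : ℝ, (m : ℝ) ^ n * dff 1 x n
      = ∑ j' ∈ range (n + 1),
          ((∑ k ∈ Icc j' n, V n k * W k j') * (m : ℝ) ^ j') * dff 1 x j' := by
    intro x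
    rw [hV n x]
    have h1 : (∑ k ∈ range (n+1), V n k * dff lam ((m:ℝ)*x+r) k)
        = ∑ k ∈ range (n+1), ∑ j' ∈ range (k+1),
            V n k * (W k j' * (m:ℝ)^j' * dff 1 x j') := by
      apply Finset.sum_congr rfl
      intro k _
      rw [hW k x, Finset.mul_sum]
    rw [h1, swap_tri n (fun k j' => V n k * (W k j' * (m:ℝ)^j' * dff 1 x j'))]
    apply Finset.sum_congr rfl
    intro j' _
    rw [Finset.sum_mul, Finset.sum_mul]
    apply Finset.sum_congr rfl
    intro k _
    ring
  have c2 : ∀ j' ≤ n,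
      (∑ k ∈ Icc j' n, V n k * W k j') * (m : ℝ) ^ j'
        - (if j' = n then (m : ℝ) ^ n else 0) = 0 := by
    apply key_indep (fun i => (i : ℝ))
    intro x
    simp only [sub_mul, Finset.sum_sub_distrib]
    rw [sub_eq_zero]
    have hr : ∑ j' ∈ range (n + 1),
        (if j' = n then (m:ℝ)^n else 0) * ∏ i ∈ range j', (x - (i : ℝ))
        = (m:ℝ)^n * ∏ i ∈ range n, (x - (i : ℝ)) := by
      rw [Finset.sum_eq_single n]
      · simp
      · intro b _ hb; simp [hb]
      · intro h'; exact absurd (self_mem_range_succ n) h'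
    rw [hr]
    have := e2 x
    simp only [hb1] at this
    exact this.symm
  -- Part 1: W ∘ V
  have e1 : ∀ x : ℝ, dff lam ((m : ℝ) * x + r) n
      = ∑ j' ∈ range (n + 1),
          (∑ k ∈ Icc j' n, W n k * V k j') * dff lam ((m : ℝ) * x + r) j' := by
    intro x
    conv_lhs => rw [hW n x]
    have h1 : (∑ k ∈ range (n+1), W n k * (m:ℝ)^k * dff 1 x k)
        = ∑ k ∈ range (n+1), ∑ j' ∈ range (k+1),
            W n k * (V k j' * dff lam ((m:ℝ)*x+r) j') := by
      apply Finset.sum_congr rfl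
      intro k _
      rw [mul_assoc, hV k x, Finset.mul_sum]
    rw [h1, swap_tri n (fun k j' => W n k * (V k j' * dff lam ((m:ℝ)*x+r) j'))]
    apply Finset.sum_congr rfl
    intro j' _
    rw [Finset.sum_mul]
    apply Finset.sum_congr rfl
    intro k _
    ring
  have c1 : ∀ j' ≤ n,
      ((∑ k ∈ Icc j' n, W n k * V k j') - (if j' = n then (1:ℝ) else 0)) * (m:ℝ)^j' = 0 := by
    apply key_indep a1
    intro x
    have expand : ∀ j' : ℕ,
        (((∑ k ∈ Icc j' n, W n k * V k j') - (if j' = n then (1:ℝ) else 0)) * (m:ℝ)^j')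
          * ∏ i ∈ range j', (x - a1 i)
        = ((∑ k ∈ Icc j' n, W n k * V k j') - (if j' = n then (1:ℝ) else 0))
            * dff lam ((m:ℝ)*x+r) j' := by
      intro j'
      rw [hb2]
      ring
    rw [Finset.sum_congr rfl fun j' _ => expand j']
    simp only [sub_mul, Finset.sum_sub_distrib]
    rw [sub_eq_zero]
    have hr : ∑ j' ∈ range (n + 1),
        (if j' = n then (1:ℝ) else 0) * dff lam ((m:ℝ)*x+r) j'
        = dff lam ((m:ℝ)*x+r) n := by
      rw [Finset.sum_eq_single n]
      · simp
      · intro b _ hb; simp [hb]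
      · intro h'; exact absurd (self_mem_range_succ n) h'
    rw [hr]
    exact (e1 x).symm
  constructor
  · have := c1 j hjn
    have h2 : (∑ k ∈ Icc j n, W n k * V k j) - (if j = n then (1:ℝ) else 0) = 0 := by
      rcases mul_eq_zero.mp this with h | h
      · exact h
      · exact absurd h (pow_ne_zero _ hm0)
    rcases eq_or_ne n j with h | h
    · subst h; simpa using sub_eq_zero.mp h2
    · have : j ≠ n := fun hh => h hh.symm
      simp [h, this] at h2 ⊢
      simpa [this] using h2
  · have := c2 j hjn
    rcases eq_or_ne n j with h | h
    · subst h
      rw [if_pos rfl, sub_eq_zero] at this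
      rw [if_pos rfl]
      have h2 := this.trans (one_mul ((m:ℝ)^n)).symm
      exact mul_right_cancel₀ (pow_ne_zero n hm0) h2
    · have hj' : j ≠ n := fun hh => h hh.symm
      rw [if_neg hj', sub_zero] at this
      rcases mul_eq_zero.mp this with h' | h'
      · simp [h, h']
      · exact absurd h' (pow_ne_zero _ hm0)
end

section
/- Inversion theorem: for sequences (f_n) and (g_n), one has f_n = Σ_{l=0}^{n} V_{m,λ}^{(r)}(n,l) g_l for all n if and only if g_n = Σ_{l=0}^{n} W_{m,λ}^{(r)}(n,l) f_l for all n. -/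
open Finset

lemma swap_sum (n : ℕ) (t : ℕ → ℕ → ℝ) :
    ∑ l ∈ range (n+1), ∑ j ∈ range (l+1), t l j
      = ∑ j ∈ range (n+1), ∑ l ∈ Icc j n, t l j := by
  induction n with
  | zero => simp
  | succ n ih =>
      have h1 : ∀ j ∈ range (n+1), ∑ l ∈ Icc j (n+1), t l j
          = (∑ l ∈ Icc j n, t l j) + t (n+1) j := by
        intro j hj
        exact Finset.sum_Icc_succ_top (by simp at hj; omega) _
      have L : ∑ l ∈ range (n+2), ∑ j ∈ range (l+1), t l j
          = (∑ j ∈ range (n+1), ∑ l ∈ Icc j n, t l j) + ∑ j ∈ range (n+2), t (n+1) j := by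
        rw [sum_range_succ, ih]
      have R : ∑ j ∈ range (n+2), ∑ l ∈ Icc j (n+1), t l j
          = (∑ j ∈ range (n+1), ((∑ l ∈ Icc j n, t l j) + t (n+1) j))
            + ∑ l ∈ Icc (n+1) (n+1), t l (n+1) := by
        rw [sum_range_succ]
        congr 1
        exact sum_congr rfl h1
      rw [L, R, Finset.sum_add_distrib, Icc_self, sum_singleton,
        sum_range_succ (fun j => t (n+1) j) (n+1)]
      ring

lemma dff_nat_eq_zero {l k : ℕ} (h : l < k) : dff 1 (l:ℝ) k = 0 := by
  unfold dff
  apply Finset.prod_eq_zero (Finset.mem_range.2 h)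
  simp

lemma dff_nat_ne_zero (l : ℕ) : dff 1 (l:ℝ) l ≠ 0 := by
  rw [dff, Finset.prod_ne_zero_iff]
  intro i hi
  simp only [mem_range] at hi
  have hne : (l:ℝ) ≠ i := by exact_mod_cast (by omega : l ≠ i)
  intro h
  apply hne
  linarith

lemma indep (N : ℕ) (c : ℕ → ℝ)
    (h : ∀ x : ℝ, ∑ l ∈ range (N+1), c l * dff 1 x l = 0) :
    ∀ l ≤ N, c l = 0 := by
  intro l
  induction l using Nat.strong_induction_on with
  | _ l ih =>
    intro hl
    have h0 := h (l : ℝ)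
    have hs : ∑ k ∈ range (N+1), c k * dff 1 (l:ℝ) k = c l * dff 1 (l:ℝ) l := by
      apply Finset.sum_eq_single_of_mem l (mem_range.2 (by omega))
      intro k hk hkl
      rcases lt_or_gt_of_ne hkl with h1 | h1
      · rw [ih k h1 (by omega), zero_mul]
      · rw [dff_nat_eq_zero h1, mul_zero]
    rw [hs] at h0
    exact (mul_eq_zero.mp h0).resolve_right (dff_nat_ne_zero l)

lemma comp_VW (m : ℕ) (hm : 0 < m) (r : ℕ) (lam : ℝ) (V W : ℕ → ℕ → ℝ)
    (hW : ∀ n : ℕ, ∀ x : ℝ,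
      dff lam ((m : ℝ) * x + r) n = ∑ k ∈ range (n + 1), W n k * (m : ℝ) ^ k * dff 1 x k)
    (hV : ∀ n : ℕ, ∀ x : ℝ,
      (m : ℝ) ^ n * dff 1 x n = ∑ k ∈ range (n + 1), V n k * dff lam ((m : ℝ) * x + r) k)
    (n l : ℕ) (hl : l ≤ n) :
    ∑ k ∈ Icc l n, V n k * W k l = if l = n then 1 else 0 := by
  set c : ℕ → ℝ := fun j =>
    (∑ k ∈ Icc j n, V n k * W k j) * (m:ℝ)^j - (if j = n then (m:ℝ)^n else 0) with hc
  have hz : ∀ x : ℝ, ∑ j ∈ range (n+1), c j * dff 1 x j = 0 := by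
    intro x
    have e1 : (m:ℝ)^n * dff 1 x n
        = ∑ j ∈ range (n+1), (∑ k ∈ Icc j n, V n k * W k j) * (m:ℝ)^j * dff 1 x j := by
      rw [hV n x]
      calc ∑ k ∈ range (n+1), V n k * dff lam ((m:ℝ)*x + r) k
          = ∑ k ∈ range (n+1), ∑ j ∈ range (k+1), V n k * (W k j * (m:ℝ)^j * dff 1 x j) := by
            refine sum_congr rfl fun k _ => ?_
            rw [hW k x, mul_sum]
        _ = ∑ j ∈ range (n+1), ∑ k ∈ Icc j n, V n k * (W k j * (m:ℝ)^j * dff 1 x j) :=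
            swap_sum n _
        _ = ∑ j ∈ range (n+1), (∑ k ∈ Icc j n, V n k * W k j) * (m:ℝ)^j * dff 1 x j := by
            refine sum_congr rfl fun j _ => ?_
            rw [sum_mul, sum_mul]
            exact sum_congr rfl fun k _ => by ring
    simp only [hc, sub_mul, sum_sub_distrib]
    rw [← e1]
    have e2 : ∑ j ∈ range (n+1), (if j = n then (m:ℝ)^n else 0) * dff 1 x j
        = (m:ℝ)^n * dff 1 x n := by
      simp [ite_mul]
    rw [e2]
    ring
  have h0 := indep n c hz l hl
  have hm' : ((m:ℝ))^l ≠ 0 := pow_ne_zero _ (Nat.cast_ne_zero.2 hm.ne')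
  simp only [hc, sub_eq_zero] at h0
  by_cases he : l = n
  · subst he
    simp only [if_pos rfl] at h0 ⊢
    exact mul_right_cancel₀ hm' (h0.trans (one_mul _).symm)
  · simp only [if_neg he] at h0 ⊢
    exact (mul_eq_zero.mp h0).resolve_right hm'

lemma block_entry (n : ℕ) (P Q : ℕ → ℕ → ℝ) (i j : Fin (n+1)) :
    (Matrix.of (fun (a b : Fin (n+1)) => if (b:ℕ) ≤ a then P a b else 0) *
     Matrix.of (fun (a b : Fin (n+1)) => if (b:ℕ) ≤ a then Q a b else 0)) i j
      = ∑ k ∈ Icc (j:ℕ) (i:ℕ), P i k * Q k j := by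
  rw [Matrix.mul_apply]
  simp only [Matrix.of_apply]
  have : ∑ k : Fin (n+1),
      (if (k:ℕ) ≤ (i:ℕ) then P i k else 0) * (if (j:ℕ) ≤ (k:ℕ) then Q k j else 0)
      = ∑ k ∈ range (n+1),
      (if k ≤ (i:ℕ) then P i k else 0) * (if (j:ℕ) ≤ k then Q k j else 0) :=
    Fin.sum_univ_eq_sum_range (fun k => (if k ≤ (i:ℕ) then P i k else 0) * (if (j:ℕ) ≤ k then Q k j else 0)) (n+1)
  rw [this]
  rw [← Finset.sum_subset (s₁ := Icc (j:ℕ) (i:ℕ))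
    (fun k hk => mem_range.2 (by have := (mem_Icc.1 hk).2; have := i.2; omega))
    (fun k _ hk => by
      rcases not_and_or.mp (fun hh => hk (mem_Icc.2 ⟨hh.2, hh.1⟩)) with h | h
      · rw [if_neg h, zero_mul]
      · rw [if_neg h, mul_zero])]
  refine sum_congr rfl fun k hk => ?_
  rw [if_pos (mem_Icc.1 hk).2, if_pos (mem_Icc.1 hk).1]

lemma comp_rev (V W : ℕ → ℕ → ℝ)
    (hd : ∀ n l, l ≤ n → ∑ k ∈ Icc l n, V n k * W k l = if l = n then 1 else 0)
    (n l : ℕ) (hl : l ≤ n) :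
    ∑ k ∈ Icc l n, W n k * V k l = if l = n then 1 else 0 := by
  have hAB : (Matrix.of (fun (a b : Fin (n+1)) => if (b:ℕ) ≤ a then V a b else 0) *
      Matrix.of (fun (a b : Fin (n+1)) => if (b:ℕ) ≤ a then W a b else 0)) = 1 := by
    ext i j
    rw [block_entry n V W i j]
    by_cases h : (j:ℕ) ≤ (i:ℕ)
    · rw [hd i j h]
      simp [Matrix.one_apply, Fin.ext_iff, eq_comm]
    · rw [Icc_eq_empty (by omega), sum_empty]
      simp only [Matrix.one_apply, Fin.ext_iff]
      rw [if_neg (by omega)]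
  have hBA := mul_eq_one_comm.mp hAB
  have h2 := congrFun (congrFun hBA ⟨n, by omega⟩) ⟨l, by omega⟩
  rw [block_entry n W V] at h2
  simp only [Matrix.one_apply, Fin.ext_iff] at h2
  simpa [eq_comm] using h2

lemma invert (M N : ℕ → ℕ → ℝ) (f g : ℕ → ℝ)
    (hd : ∀ n l, l ≤ n → ∑ k ∈ Icc l n, M n k * N k l = if l = n then 1 else 0)
    (hf : ∀ n, f n = ∑ l ∈ range (n+1), N n l * g l) :
    ∀ n, g n = ∑ l ∈ range (n+1), M n l * f l := by
  intro n
  symm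
  calc ∑ l ∈ range (n+1), M n l * f l
      = ∑ l ∈ range (n+1), ∑ j ∈ range (l+1), M n l * (N l j * g j) := by
        refine sum_congr rfl fun l _ => ?_
        rw [hf l, mul_sum]
    _ = ∑ j ∈ range (n+1), ∑ l ∈ Icc j n, M n l * (N l j * g j) := swap_sum n _
    _ = ∑ j ∈ range (n+1), (∑ l ∈ Icc j n, M n l * N l j) * g j := by
        refine sum_congr rfl fun j _ => ?_
        rw [sum_mul]
        exact sum_congr rfl fun l _ => by ring
    _ = ∑ j ∈ range (n+1), (if j = n then 1 else 0) * g j := by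
        refine sum_congr rfl fun j hj => ?_
        rw [hd n j (by simp at hj; omega)]
    _ = g n := by simp [ite_mul]


theorem stmt17 (m : ℕ) (hm : 0 < m) (r : ℕ) (lam : ℝ) (V W : ℕ → ℕ → ℝ) (f g : ℕ → ℝ)
    (hW : ∀ n : ℕ, ∀ x : ℝ,
      dff lam ((m : ℝ) * x + r) n = ∑ k ∈ range (n + 1), W n k * (m : ℝ) ^ k * dff 1 x k)
    (hV : ∀ n : ℕ, ∀ x : ℝ,
      (m : ℝ) ^ n * dff 1 x n = ∑ k ∈ range (n + 1), V n k * dff lam ((m : ℝ) * x + r) k) :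
    (∀ n : ℕ, f n = ∑ l ∈ range (n + 1), V n l * g l) ↔
    (∀ n : ℕ, g n = ∑ l ∈ range (n + 1), W n l * f l) := by
  have d1 := comp_VW m hm r lam V W hW hV
  have d2 := comp_rev V W d1
  constructor
  · intro hf
    exact invert W V f g d2 hf
  · intro hg
    exact invert V W g f d1 hg
end

section
/- For all n ≥ i ≥ 0, W_{m,λ}^{(r)}(n,i) = (1/(m^i · i!)) Σ_{k=0}^{i} C(i,k) (−1)^{i−k} (mk + r)_{n,λ}. -/
open Finset

lemma dff_one_nat (k j : ℕ) : dff 1 (k : ℝ) j = (k.descFactorial j : ℝ) := by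
  induction j with
  | zero => simp [dff]
  | succ j ih =>
    rw [dff, Finset.prod_range_succ, ← dff, ih, Nat.descFactorial_succ]
    rcases le_or_gt j k with h | h
    · push_cast [h]; ring
    · rw [Nat.descFactorial_eq_zero_iff_lt.2 h]
      simp

lemma alt_sum (n : ℕ) :
    ∑ t ∈ range (n + 1), (n.choose t : ℝ) * (-1 : ℝ) ^ (n - t) =
      if n = 0 then 1 else 0 := by
  have := Finset.sum_range_reflect (fun t => ((-1 : ℝ)) ^ t * (n.choose t : ℝ)) (n + 1)
  simp only [Nat.add_sub_cancel] at this
  have h2 : ∀ t ∈ range (n + 1),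
      ((-1 : ℝ)) ^ (n - t) * (n.choose (n - t) : ℝ) =
        (n.choose t : ℝ) * (-1 : ℝ) ^ (n - t) := by
    intro t ht
    rw [Nat.choose_symm (Nat.lt_succ_iff.1 (mem_range.1 ht))]
    ring
  rw [Finset.sum_congr rfl h2] at this
  rw [this]
  have := @Int.alternating_sum_range_choose n
  have := congrArg (fun z : ℤ => (z : ℝ)) this
  push_cast at this
  rw [this]

lemma key_sum (i j : ℕ) :
    ∑ k ∈ range (i + 1), (i.choose k : ℝ) * (-1 : ℝ) ^ (i - k) * (k.descFactorial j : ℝ) =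
      if j = i then (i.factorial : ℝ) else 0 := by
  rcases lt_or_ge i j with h | h
  · rw [if_neg (by omega)]
    refine Finset.sum_eq_zero fun k hk => ?_
    rw [mem_range] at hk
    rw [Nat.descFactorial_eq_zero_iff_lt.2 (by omega)]
    simp
  · have step : ∀ k ∈ range (i + 1),
        (i.choose k : ℝ) * (-1 : ℝ) ^ (i - k) * (k.descFactorial j : ℝ) =
          if k ∈ Finset.Ico j (i + 1) then
            ((i.choose j : ℝ) * (j.factorial : ℝ)) *
              (((i - j).choose (k - j) : ℝ) * (-1 : ℝ) ^ ((i - j) - (k - j))) else 0 := by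
      intro k hk
      rw [mem_range] at hk
      by_cases hjk : j ≤ k
      · rw [if_pos (by rw [mem_Ico]; omega)]
        have hmul := Nat.choose_mul (n := i) hjk
        rw [Nat.descFactorial_eq_factorial_mul_choose]
        have : (i.choose k : ℝ) * (k.choose j : ℝ) =
            (i.choose j : ℝ) * ((i - j).choose (k - j) : ℝ) := by
          exact_mod_cast congrArg (fun x : ℕ => (x : ℝ)) hmul
        have hexp : (i - j) - (k - j) = i - k := by omega
        rw [hexp]
        push_cast
        linear_combination ((-1:ℝ))^(i-k) * (j.factorial:ℝ) * this
      · rw [if_neg (by rw [mem_Ico]; omega),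
          Nat.descFactorial_eq_zero_iff_lt.2 (by omega)]
        simp
    rw [Finset.sum_congr rfl step, Finset.sum_ite_mem,
      (by rw [Finset.inter_eq_right]; intro k; rw [mem_Ico, mem_range]; omega :
        range (i + 1) ∩ Finset.Ico j (i + 1) = Finset.Ico j (i + 1)),
      ← Finset.mul_sum, Finset.sum_Ico_eq_sum_range]
    have : ∀ t ∈ range (i + 1 - j),
        ((i - j).choose (j + t - j) : ℝ) * (-1 : ℝ) ^ ((i - j) - (j + t - j)) =
          ((i - j).choose t : ℝ) * (-1 : ℝ) ^ ((i - j) - t) := by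
      intro t _; rw [Nat.add_sub_cancel_left]
    rw [Finset.sum_congr rfl this, (by omega : i + 1 - j = (i - j) + 1), alt_sum]
    rcases eq_or_lt_of_le h with rfl | hlt
    · simp
    · rw [if_neg (by omega), if_neg (by omega), mul_zero]

theorem stmt18 (m : ℕ) (hm : 0 < m) (r : ℕ) (lam : ℝ) (W : ℕ → ℕ → ℝ)
    (hW : ∀ n : ℕ, ∀ x : ℝ,
      dff lam ((m : ℝ) * x + r) n = ∑ i ∈ range (n + 1), W n i * (m : ℝ) ^ i * dff 1 x i) :
    ∀ n i : ℕ, i ≤ n →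
      W n i = (1 / ((m : ℝ) ^ i * (i.factorial : ℝ))) *
        ∑ k ∈ range (i + 1), (i.choose k : ℝ) * (-1 : ℝ) ^ (i - k) *
          dff lam ((m : ℝ) * k + r) n := by
  intro n i hin
  have hS : ∑ k ∈ range (i + 1), (i.choose k : ℝ) * (-1 : ℝ) ^ (i - k) *
      dff lam ((m : ℝ) * k + r) n = W n i * (m : ℝ) ^ i * (i.factorial : ℝ) := by
    calc ∑ k ∈ range (i + 1), (i.choose k : ℝ) * (-1 : ℝ) ^ (i - k) *
          dff lam ((m : ℝ) * k + r) n
        = ∑ k ∈ range (i + 1), ∑ j ∈ range (n + 1),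
            W n j * (m : ℝ) ^ j *
              ((i.choose k : ℝ) * (-1 : ℝ) ^ (i - k) * (k.descFactorial j : ℝ)) := by
          refine Finset.sum_congr rfl fun k _ => ?_
          rw [hW n (k : ℝ), Finset.mul_sum]
          refine Finset.sum_congr rfl fun j _ => ?_
          rw [dff_one_nat]; ring
      _ = ∑ j ∈ range (n + 1), W n j * (m : ℝ) ^ j *
            ∑ k ∈ range (i + 1),
              (i.choose k : ℝ) * (-1 : ℝ) ^ (i - k) * (k.descFactorial j : ℝ) := by
          rw [Finset.sum_comm]
          exact Finset.sum_congr rfl fun j _ => by rw [Finset.mul_sum]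
      _ = ∑ j ∈ range (n + 1), W n j * (m : ℝ) ^ j *
            (if j = i then (i.factorial : ℝ) else 0) := by
          exact Finset.sum_congr rfl fun j _ => by rw [key_sum]
      _ = W n i * (m : ℝ) ^ i * (i.factorial : ℝ) := by
          rw [Finset.sum_eq_single i]
          · simp
          · intro j _ hji; rw [if_neg hji, mul_zero]
          · intro hni; exact absurd (mem_range.2 (by omega)) hni
  rw [hS]
  have h1 : ((m : ℝ)) ^ i ≠ 0 := pow_ne_zero _ (by exact_mod_cast hm.ne')
  have h2 : ((i.factorial : ℝ)) ≠ 0 := by exact_mod_cast i.factorial_ne_zero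
  field_simp
end
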